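/- Let K be a finite group, p a prime, q = p, W = {(x₁,…,x_p) ∈ Z(K)^p : x₁⋯x_p = 1}, U = K^p/W, and α the automorphism of U induced by the cyclic shift (x₁,…,x_p) ↦ (x_p,x₁,…,x_{p-1}) on K^p. Set H = U ⋊ ⟨α⟩. If K ≠ Z(K), then Z(H) = Z(U) and H/Z(H) ≅ (K/Z(K)) ≀ C_p. -/

import Mathlib

open scoped BigOperators
open scoped IsMulCommutative

variable (K : Type) [Group K]

/-- The product map `Z(K)^q → Z(K)`, a homomorphism since the center is commutative. -/
noncomputable def centerProdHom (q : ℕ) : (Fin q → Subgroup.center K) →* Subgroup.center K where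
  toFun x := ∏ i, x i
  map_one' := by simp
  map_mul' x y := by simp [Finset.prod_mul_distrib]

/-- The canonical embedding `Z(K)^q → K^q`. -/
noncomputable def centerPiEmbed (q : ℕ) : (Fin q → Subgroup.center K) →* (Fin q → K) :=
  Pi.monoidHom fun i => (Subgroup.center K).subtype.comp
    (Pi.evalMonoidHom (fun _ => Subgroup.center K) i)

/-- `W = {(x₁,…,x_q) ∈ Z(K)^q : x₁⋯x_q = 1}`, as a subgroup of `K^q`. -/
noncomputable def Wsub (q : ℕ) : Subgroup (Fin q → K) :=
  (centerProdHom K q).ker.map (centerPiEmbed K q)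

instance (q : ℕ) : (Wsub K q).Normal := by
  constructor
  rintro w hw g
  obtain ⟨y, hy, rfl⟩ := hw
  have h : g * centerPiEmbed K q y * g⁻¹ = centerPiEmbed K q y := by
    funext i
    show g i * (y i : K) * (g i)⁻¹ = (y i : K)
    rw [Subgroup.mem_center_iff.mp (y i).2 (g i), mul_inv_cancel_right]
  rw [h]
  exact ⟨y, hy, rfl⟩

/-- The cyclic shift automorphism `(x₁,…,x_p) ↦ (x_p,x₁,…,x_{p-1})` of `G^p`. -/
def shiftAut (G : Type) [Group G] (p : ℕ) [NeZero p] : MulAut (Fin p → G) where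
  toFun x := fun i => x (i - 1)
  invFun x := fun i => x (i + 1)
  left_inv x := by funext i; simp
  right_inv x := by funext i; simp
  map_mul' x y := rfl

/-- The cyclic shift preserves `W`. -/
theorem shift_maps_W (p : ℕ) [NeZero p] :
    (Wsub K p).map (shiftAut K p).toMonoidHom = Wsub K p := by
  ext w
  simp only [Wsub, Subgroup.mem_map]
  constructor
  · rintro ⟨v, ⟨y, hy, rfl⟩, rfl⟩
    refine ⟨fun i => y (i - 1), ?_, rfl⟩
    have h : ∏ i, y (i - 1) = ∏ i, y i :=
      Fintype.prod_equiv (Equiv.subRight (1 : Fin p)) _ _ (fun i => rfl)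
    simpa [MonoidHom.mem_ker, centerProdHom, h] using hy
  · rintro ⟨y, hy, rfl⟩
    refine ⟨centerPiEmbed K p fun i => y (i + 1), ⟨fun i => y (i + 1), ?_, rfl⟩, ?_⟩
    · have h : ∏ i, y (i + 1) = ∏ i, y i :=
        Fintype.prod_equiv (Equiv.addRight (1 : Fin p)) _ _ (fun i => rfl)
      simpa [MonoidHom.mem_ker, centerProdHom, h] using hy
    · funext i
      show ((y (i - 1 + 1) : K)) = (y i : K)
      rw [sub_add_cancel]

/-- The automorphism `α` of `U = K^p/W` induced by the cyclic shift. -/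
noncomputable def shiftAutU (p : ℕ) [NeZero p] :
    MulAut ((Fin p → K) ⧸ Wsub K p) :=
  QuotientGroup.congr (Wsub K p) (Wsub K p) (shiftAut K p) (shift_maps_W K p)

/-- `H = U ⋊ ⟨α⟩` where `U = K^p/W` and `α` is the induced shift automorphism. -/
noncomputable abbrev Hgrp (p : ℕ) [NeZero p] : Type :=
  ((Fin p → K) ⧸ Wsub K p) ⋊[(Subgroup.zpowers (shiftAutU K p)).subtype]
    (Subgroup.zpowers (shiftAutU K p))

/-- The regular wreath product `Q ≀ C_p`, realized as `Q^p ⋊ ⟨cyclic shift⟩`. -/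
noncomputable abbrev WreathCp (Q : Type) [Group Q] (p : ℕ) [NeZero p] : Type :=
  (Fin p → Q) ⋊[(Subgroup.zpowers (shiftAut Q p)).subtype] (Subgroup.zpowers (shiftAut Q p))


open Fin.CommRing

/-! ### Auxiliary lemmas -/

section AuxGeneric

variable {G G' : Type} [Group G] [Group G']

lemma auxFix (e : MulAut G) (a : G) (h : e a = a) : ∀ k : ℤ, (e ^ k) a = a := by
  have hinv : e⁻¹ a = a := by
    have : e.symm a = a := by conv_lhs => rw [← h, MulEquiv.symm_apply_apply]
    exact this
  intro k
  induction k using Int.induction_on with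
  | zero => simp
  | succ n ih => rw [zpow_add_one, MulAut.mul_apply, h, ih]
  | pred n ih => rw [zpow_sub_one, MulAut.mul_apply, hinv, ih]

lemma auxSemiconjNat (f : G →* G') (e : MulAut G) (e' : MulAut G')
    (h : ∀ x, f (e x) = e' (f x)) :
    ∀ (n : ℕ) (x : G), f ((e ^ n) x) = (e' ^ n) (f x) := by
  intro n
  induction n with
  | zero => intro x; simp
  | succ n ih =>
    intro x
    simp only [pow_succ, MulAut.mul_apply]
    rw [ih, h]

lemma auxSemiconjZpow (f : G →* G') (e : MulAut G) (e' : MulAut G')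
    (h : ∀ x, f (e x) = e' (f x)) :
    ∀ (k : ℤ) (x : G), f ((e ^ k) x) = (e' ^ k) (f x) := by
  have hinv : ∀ x, f (e⁻¹ x) = e'⁻¹ (f x) := by
    intro x
    apply e'.injective
    have h1 : e' (e'⁻¹ (f x)) = f x := by
      rw [← MulAut.mul_apply, mul_inv_cancel, MulAut.one_apply]
    have h2 : e (e⁻¹ x) = x := by
      rw [← MulAut.mul_apply, mul_inv_cancel, MulAut.one_apply]
    rw [h1, ← h, h2]
  intro k
  induction k using Int.induction_on with
  | zero => intro x; simp
  | succ n ih =>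
    intro x
    simp only [zpow_add_one, MulAut.mul_apply]
    rw [ih, h]
  | pred n ih =>
    intro x
    simp only [zpow_sub_one, MulAut.mul_apply]
    rw [ih, hinv]

lemma shiftAut_zpow_apply (G : Type) [Group G] (p : ℕ) [NeZero p] :
    ∀ (k : ℤ) (x : Fin p → G) (i : Fin p),
      ((shiftAut G p ^ k) x) i = x (i - (k : Fin p)) := by
  intro k
  induction k using Int.induction_on with
  | zero => intro x i; simp
  | succ n ih =>
    intro x i
    simp only [zpow_add_one, MulAut.mul_apply]
    rw [ih (shiftAut G p x) i]
    show x (i - (n : Fin p) - 1) = x (i - ((n : ℤ) + 1 : ℤ))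
    congr 1
    push_cast
    ring
  | pred n ih =>
    intro x i
    simp only [zpow_sub_one, MulAut.mul_apply]
    rw [ih ((shiftAut G p)⁻¹ x) i]
    show x (i - ((-n : ℤ) : Fin p) + 1) = x (i - ((-n : ℤ) - 1 : ℤ))
    congr 1
    push_cast
    ring

lemma shift_zpow_eq_one (G : Type) [Group G] (p : ℕ) [NeZero p] (k : ℤ)
    (hk : (k : Fin p) = 0) : shiftAut G p ^ k = 1 := by
  apply MulEquiv.ext
  intro x
  funext i
  rw [shiftAut_zpow_apply, hk, sub_zero]
  rfl

end AuxGeneric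

section AuxK

variable (K : Type) [Group K] (p : ℕ) [NeZero p]

lemma mem_Wsub {w : Fin p → K} (hw : w ∈ Wsub K p) :
    ∃ hc : ∀ i, w i ∈ Subgroup.center K,
      ∏ i, (⟨w i, hc i⟩ : Subgroup.center K) = 1 := by
  obtain ⟨y, hy, rfl⟩ := hw
  have hy2 : ∏ i, y i = (1 : Subgroup.center K) := hy
  refine ⟨fun i => (y i).2, ?_⟩
  calc ∏ i, (⟨centerPiEmbed K p y i, (y i).2⟩ : Subgroup.center K)
      = ∏ i, y i := Finset.prod_congr rfl (fun i _ => Subtype.ext rfl)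
    _ = 1 := hy2

lemma mem_Wsub_of (w : Fin p → K) (hc : ∀ i, w i ∈ Subgroup.center K)
    (hprod : (∏ i, (⟨w i, hc i⟩ : Subgroup.center K)) = 1) : w ∈ Wsub K p :=
  ⟨fun i => ⟨w i, hc i⟩, hprod, rfl⟩

lemma shiftAutU_mk (x : Fin p → K) :
    shiftAutU K p (QuotientGroup.mk x) = QuotientGroup.mk (shiftAut K p x) :=
  QuotientGroup.congr_mk _ _ _ _ x

lemma shiftAutU_zpow_mk (k : ℤ) (x : Fin p → K) :
    (shiftAutU K p ^ k) (QuotientGroup.mk x)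
      = QuotientGroup.mk ((shiftAut K p ^ k) x) :=
  (auxSemiconjZpow (QuotientGroup.mk' (Wsub K p)) (shiftAut K p) (shiftAutU K p)
    (fun x => (shiftAutU_mk K p x).symm) k x).symm

lemma mk_mem_center_iff (x : Fin p → K) :
    (QuotientGroup.mk x : (Fin p → K) ⧸ Wsub K p)
      ∈ Subgroup.center ((Fin p → K) ⧸ Wsub K p) ↔ ∀ i, x i ∈ Subgroup.center K := by
  constructor
  · intro hx j
    rw [Subgroup.mem_center_iff]
    intro b
    have h1 := Subgroup.mem_center_iff.mp hx (QuotientGroup.mk (Pi.mulSingle (M := fun _ : Fin p => K) j b))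
    rw [← QuotientGroup.mk_mul, ← QuotientGroup.mk_mul, QuotientGroup.eq] at h1
    obtain ⟨hc, h2⟩ := mem_Wsub K p h1
    rw [Finset.prod_eq_single j (fun i _ hij => ?_) (fun h => absurd (Finset.mem_univ j) h)] at h2
    · have h3 : ((Pi.mulSingle (M := fun _ : Fin p => K) j b * x)⁻¹ * (x * Pi.mulSingle (M := fun _ : Fin p => K) j b)) j = 1 :=
        congrArg Subtype.val h2
      have h4 : (Pi.mulSingle (M := fun _ : Fin p => K) j b j * x j)⁻¹ * (x j * Pi.mulSingle (M := fun _ : Fin p => K) j b j) = 1 := h3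
      rw [Pi.mulSingle_eq_same] at h4
      rw [inv_mul_eq_one] at h4
      exact h4
    · apply Subtype.ext
      have hne : Pi.mulSingle (M := fun _ : Fin p => K) j b i = 1 := Pi.mulSingle_eq_of_ne (M := fun _ : Fin p => K) hij b
      show ((Pi.mulSingle (M := fun _ : Fin p => K) j b * x)⁻¹ * (x * Pi.mulSingle (M := fun _ : Fin p => K) j b)) i = 1
      have h5 : (Pi.mulSingle (M := fun _ : Fin p => K) j b i * x i)⁻¹ * (x i * Pi.mulSingle (M := fun _ : Fin p => K) j b i) = 1 := by
        rw [hne, one_mul, mul_one, inv_mul_cancel]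
      exact h5
  · intro hx
    rw [Subgroup.mem_center_iff]
    intro u
    obtain ⟨y, rfl⟩ := QuotientGroup.mk_surjective u
    rw [← QuotientGroup.mk_mul, ← QuotientGroup.mk_mul]
    congr 1
    funext i
    exact Subgroup.mem_center_iff.mp (hx i) (y i)

lemma shiftAutU_fix_center (u : (Fin p → K) ⧸ Wsub K p)
    (hu : u ∈ Subgroup.center ((Fin p → K) ⧸ Wsub K p)) :
    shiftAutU K p u = u := by
  obtain ⟨x, rfl⟩ := QuotientGroup.mk_surjective u
  have hx := (mk_mem_center_iff K p x).mp hu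
  rw [shiftAutU_mk]
  rw [QuotientGroup.eq]
  have hc : ∀ i, ((shiftAut K p x)⁻¹ * x) i ∈ Subgroup.center K := by
    intro i
    exact mul_mem (inv_mem (hx (i - 1))) (hx i)
  apply mem_Wsub_of K p _ hc
  have key : (fun i => (⟨((shiftAut K p x)⁻¹ * x) i, hc i⟩ : Subgroup.center K))
      = fun i => (⟨x (i - 1), hx (i - 1)⟩ : Subgroup.center K)⁻¹ * ⟨x i, hx i⟩ :=
    funext fun i => Subtype.ext rfl
  rw [key, Finset.prod_mul_distrib]
  rw [Finset.prod_inv_distrib]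
  have : ∏ i, (⟨x (i - 1), hx (i - 1)⟩ : Subgroup.center K) = ∏ i, (⟨x i, hx i⟩ : Subgroup.center K) :=
    Fintype.prod_equiv (Equiv.subRight (1 : Fin p)) _ _ (fun i => rfl)
  rw [this, inv_mul_cancel]

lemma shiftAutU_zpow_eq_one (k : ℤ) (hk : (k : Fin p) = 0) :
    shiftAutU K p ^ k = 1 := by
  apply MulEquiv.ext
  intro u
  obtain ⟨x, rfl⟩ := QuotientGroup.mk_surjective u
  rw [shiftAutU_zpow_mk]
  have : (shiftAut K p ^ k) x = x := by rw [shift_zpow_eq_one K p k hk]; rfl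
  rw [this]
  rfl

end AuxK

section CyclicHom

variable {G G' : Type} [Group G] [Group G']

lemma aux_transfer {a : G} {b : G'} (hiff : ∀ k : ℤ, a ^ k = 1 ↔ b ^ k = 1)
    {m n : ℤ} (h : a ^ m = a ^ n) : b ^ m = b ^ n := by
  have h1 : a ^ (m - n) = 1 := by rw [zpow_sub, h, mul_inv_cancel]
  have h2 : b ^ (m - n) = 1 := (hiff _).mp h1
  rw [zpow_sub, mul_inv_eq_one] at h2
  exact h2

/-- exponent extraction for elements of `zpowers a` -/
noncomputable def cexp (a : G) (σ : Subgroup.zpowers a) : ℤ :=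
  (Subgroup.mem_zpowers_iff.mp σ.2).choose

lemma cexp_spec (a : G) (σ : Subgroup.zpowers a) : a ^ cexp a σ = (σ : G) :=
  (Subgroup.mem_zpowers_iff.mp σ.2).choose_spec

/-- A homomorphism between cyclic groups `⟨a⟩ → ⟨b⟩`, `a ^ k ↦ b ^ k`. -/
noncomputable def cyclicHom (a : G) (b : G') (hiff : ∀ k : ℤ, a ^ k = 1 ↔ b ^ k = 1) :
    Subgroup.zpowers a →* Subgroup.zpowers b where
  toFun σ := ⟨b ^ cexp a σ, Subgroup.mem_zpowers_iff.mpr ⟨cexp a σ, rfl⟩⟩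
  map_one' := by
    apply Subtype.ext
    have h : a ^ cexp a (1 : Subgroup.zpowers a) = a ^ (0 : ℤ) := by
      rw [cexp_spec]; simp
    have := aux_transfer hiff h
    simpa using this
  map_mul' σ τ := by
    apply Subtype.ext
    have h : a ^ cexp a (σ * τ) = a ^ (cexp a σ + cexp a τ) := by
      rw [cexp_spec, zpow_add, cexp_spec, cexp_spec]; rfl
    have := aux_transfer hiff h
    simpa [zpow_add] using this

lemma cyclicHom_apply (a : G) (b : G') (hiff : ∀ k : ℤ, a ^ k = 1 ↔ b ^ k = 1)
    (σ : Subgroup.zpowers a) (k : ℤ) (h : (σ : G) = a ^ k) :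
    ((cyclicHom a b hiff σ : Subgroup.zpowers b) : G') = b ^ k :=
  aux_transfer hiff ((cexp_spec a σ).trans h)

lemma cyclicHom_surjective (a : G) (b : G') (hiff : ∀ k : ℤ, a ^ k = 1 ↔ b ^ k = 1) :
    Function.Surjective (cyclicHom a b hiff) := by
  intro τ
  obtain ⟨k, hk⟩ := Subgroup.mem_zpowers_iff.mp τ.2
  refine ⟨⟨a ^ k, Subgroup.mem_zpowers_iff.mpr ⟨k, rfl⟩⟩, ?_⟩
  apply Subtype.ext
  rw [cyclicHom_apply a b hiff _ k rfl, hk]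

lemma cyclicHom_injective (a : G) (b : G') (hiff : ∀ k : ℤ, a ^ k = 1 ↔ b ^ k = 1) :
    Function.Injective (cyclicHom a b hiff) := by
  rw [injective_iff_map_eq_one]
  intro σ hσ
  have h1 : b ^ cexp a σ = 1 := congrArg Subtype.val hσ
  have h2 : a ^ cexp a σ = 1 := (hiff _).mpr h1
  apply Subtype.ext
  rw [← cexp_spec a σ, h2]
  rfl

end CyclicHom

section F1

variable (K : Type) [Group K] (p : ℕ) [NeZero p]

/-- The componentwise quotient map `K^p → (K/Z(K))^p`. -/
def piMkHom : (Fin p → K) →* (Fin p → K ⧸ Subgroup.center K) :=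
  Pi.monoidHom fun i => (QuotientGroup.mk' (Subgroup.center K)).comp
    (Pi.evalMonoidHom (fun _ => K) i)

lemma piMkHom_ker (w : Fin p → K) (hw : w ∈ Wsub K p) : piMkHom K p w = 1 := by
  funext i
  exact (QuotientGroup.eq_one_iff _).mpr ((mem_Wsub K p hw).1 i)

/-- The induced map `U = K^p/W → (K/Z(K))^p`. -/
noncomputable def f1 : ((Fin p → K) ⧸ Wsub K p) →* (Fin p → K ⧸ Subgroup.center K) :=
  QuotientGroup.lift (Wsub K p) (piMkHom K p)
    (fun w hw => piMkHom_ker K p w hw)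

lemma f1_mk (x : Fin p → K) :
    f1 K p (QuotientGroup.mk x) = fun i => QuotientGroup.mk (x i) := rfl

lemma f1_shift (u : (Fin p → K) ⧸ Wsub K p) :
    f1 K p (shiftAutU K p u) = shiftAut (K ⧸ Subgroup.center K) p (f1 K p u) := by
  obtain ⟨x, rfl⟩ := QuotientGroup.mk_surjective u
  rw [shiftAutU_mk]
  rfl

lemma f1_eq_one_iff (u : (Fin p → K) ⧸ Wsub K p) :
    f1 K p u = 1 ↔ u ∈ Subgroup.center ((Fin p → K) ⧸ Wsub K p) := by
  obtain ⟨x, rfl⟩ := QuotientGroup.mk_surjective u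
  rw [mk_mem_center_iff, f1_mk]
  constructor
  · intro h i
    have := congrFun h i
    exact (QuotientGroup.eq_one_iff _).mp this
  · intro h
    funext i
    exact (QuotientGroup.eq_one_iff _).mpr (h i)

lemma f1_surjective : Function.Surjective (f1 K p) := by
  intro w
  have : ∀ i, ∃ a : K, QuotientGroup.mk a = w i :=
    fun i => QuotientGroup.mk_surjective (w i)
  choose g hg using this
  exact ⟨QuotientGroup.mk g, by rw [f1_mk]; funext i; exact hg i⟩

end F1

section Orders

variable (K : Type) [Group K] (p : ℕ) [NeZero p]

lemma one_ne_zero_fin (hp : p.Prime) : (1 : Fin p) ≠ 0 := by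
  intro h
  have h1 := Fin.one_eq_zero_iff.mp h
  have h2 := hp.one_lt
  omega

lemma natCast_p_fin : ((p : ℤ) : Fin p) = 0 := by
  rw [Int.cast_natCast, Fin.natCast_self]

lemma orderOf_shiftAut_eq (G : Type) [Group G] [Nontrivial G] (hp : p.Prime) :
    orderOf (shiftAut G p) = p := by
  haveI := Fact.mk hp
  apply orderOf_eq_prime
  · rw [← zpow_natCast]
    exact shift_zpow_eq_one G p p (natCast_p_fin p)
  · intro h
    obtain ⟨b, hb⟩ := exists_ne (1 : G)
    have h1 : (shiftAut G p) (Pi.mulSingle (M := fun _ : Fin p => G) (0 : Fin p) b) 1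
        = Pi.mulSingle (M := fun _ : Fin p => G) (0 : Fin p) b 1 := by rw [h]; rfl
    have h2 : Pi.mulSingle (M := fun _ : Fin p => G) (0 : Fin p) b ((1 : Fin p) - 1) = Pi.mulSingle (M := fun _ : Fin p => G) (0 : Fin p) b 1 := h1
    rw [sub_self, Pi.mulSingle_eq_same, Pi.mulSingle_eq_of_ne (M := fun _ : Fin p => G) (one_ne_zero_fin p hp) b] at h2
    exact hb h2

lemma orderOf_shiftAutU_eq (hp : p.Prime) (hK : Subgroup.center K ≠ ⊤) :
    orderOf (shiftAutU K p) = p := by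
  haveI := Fact.mk hp
  apply orderOf_eq_prime
  · rw [← zpow_natCast]
    exact shiftAutU_zpow_eq_one K p p (natCast_p_fin p)
  · intro h
    obtain ⟨a, ha⟩ : ∃ a : K, a ∉ Subgroup.center K := by
      by_contra hc
      push_neg at hc
      exact hK ((Subgroup.eq_top_iff' _).mpr hc)
    set x : Fin p → K := Pi.mulSingle (M := fun _ : Fin p => K) (0 : Fin p) a with hxdef
    have h1 : shiftAutU K p (QuotientGroup.mk x) = QuotientGroup.mk x := by rw [h]; rfl
    rw [shiftAutU_mk, QuotientGroup.eq] at h1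
    obtain ⟨hcW, -⟩ := mem_Wsub K p h1
    have h2 := hcW 1
    have h3 : ((shiftAut K p x)⁻¹ * x) 1 = a⁻¹ := by
      show (x ((1 : Fin p) - 1))⁻¹ * x 1 = a⁻¹
      rw [sub_self, hxdef, Pi.mulSingle_eq_same, Pi.mulSingle_eq_of_ne (M := fun _ : Fin p => K) (one_ne_zero_fin p hp) a,
        mul_one]
    rw [h3] at h2
    exact ha (by simpa using inv_mem h2)

lemma nontrivial_quot (hK : Subgroup.center K ≠ ⊤) :
    Nontrivial (K ⧸ Subgroup.center K) := by
  obtain ⟨a, ha⟩ : ∃ a : K, a ∉ Subgroup.center K := by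
    by_contra hc
    push_neg at hc
    exact hK ((Subgroup.eq_top_iff' _).mpr hc)
  exact ⟨⟨QuotientGroup.mk a, 1, fun h => ha ((QuotientGroup.eq_one_iff _).mp h)⟩⟩

end Orders

section MainAux

variable (K : Type) [Group K] (p : ℕ) [NeZero p]

lemma mem_map_inl_iff {N G : Type} [Group N] [Group G] {φ : G →* MulAut N}
    (S : Subgroup N) (z : N ⋊[φ] G) :
    z ∈ S.map (SemidirectProduct.inl : N →* N ⋊[φ] G) ↔ z.left ∈ S ∧ z.right = 1 := by
  constructor
  · rintro ⟨u, hu, rfl⟩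
    exact ⟨hu, rfl⟩
  · rintro ⟨h1, h2⟩
    refine ⟨z.left, h1, SemidirectProduct.ext rfl ?_⟩
    exact h2.symm

lemma center_Hgrp (hp : p.Prime) (hK : Subgroup.center K ≠ ⊤) :
    Subgroup.center (Hgrp K p) =
      (Subgroup.center ((Fin p → K) ⧸ Wsub K p)).map SemidirectProduct.inl := by
  ext z
  rw [mem_map_inl_iff]
  constructor
  · intro hz
    have key : ∀ v : (Fin p → K) ⧸ Wsub K p,
        v * z.left = z.left * (z.right : MulAut ((Fin p → K) ⧸ Wsub K p)) v := by
      intro v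
      have h1 := Subgroup.mem_center_iff.mp hz (SemidirectProduct.inl v)
      have h2 := congrArg SemidirectProduct.left h1
      rw [SemidirectProduct.mul_left, SemidirectProduct.mul_left] at h2
      simpa using h2
    obtain ⟨k, hk⟩ := Subgroup.mem_zpowers_iff.mp z.right.2
    have hk0 : ((k : ℤ) : Fin p) = 0 := by
      by_contra hc
      obtain ⟨a, ha⟩ : ∃ a : K, a ∉ Subgroup.center K := by
        by_contra hcc
        push_neg at hcc
        exact hK ((Subgroup.eq_top_iff' _).mpr hcc)
      obtain ⟨g, hg⟩ := QuotientGroup.mk_surjective z.left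
      set c : Fin p := ((k : ℤ) : Fin p) with hcdef
      set x : Fin p → K := Pi.mulSingle (M := fun _ : Fin p => K) (-c) a with hxdef
      have h3 := key (QuotientGroup.mk x)
      rw [← hk, ← hg, shiftAutU_zpow_mk, ← QuotientGroup.mk_mul, ← QuotientGroup.mk_mul,
        QuotientGroup.eq] at h3
      obtain ⟨hcW, -⟩ := mem_Wsub K p h3
      have h4 := hcW 0
      have hx0 : x 0 = 1 := by
        rw [hxdef]
        refine Pi.mulSingle_eq_of_ne (M := fun _ : Fin p => K) (fun h0 : (0 : Fin p) = -c => ?_) a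
        exact hc (neg_eq_zero.mp h0.symm)
      have hshift : ((shiftAut K p ^ k) x) 0 = a := by
        rw [shiftAut_zpow_apply, zero_sub, hxdef]
        exact Pi.mulSingle_eq_same (M := fun _ : Fin p => K) (-c) a
      have h5 : ((x * g)⁻¹ * (g * (shiftAut K p ^ k) x)) 0 = a := by
        show (x 0 * g 0)⁻¹ * (g 0 * ((shiftAut K p ^ k) x) 0) = a
        rw [hx0, hshift, one_mul, inv_mul_cancel_left]
      rw [h5] at h4
      exact ha h4
    have hz1 : (z.right : MulAut ((Fin p → K) ⧸ Wsub K p)) = 1 := by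
      rw [← hk]
      exact shiftAutU_zpow_eq_one K p k hk0
    have hright : z.right = 1 := Subtype.ext hz1
    refine ⟨?_, hright⟩
    rw [Subgroup.mem_center_iff]
    intro v
    have := key v
    rw [hz1, MulAut.one_apply] at this
    exact this
  · rintro ⟨h1, h2⟩
    rw [Subgroup.mem_center_iff]
    intro h
    obtain ⟨k, hk⟩ := Subgroup.mem_zpowers_iff.mp h.right.2
    have hfix : (h.right : MulAut ((Fin p → K) ⧸ Wsub K p)) z.left = z.left := by
      rw [← hk]
      exact auxFix _ _ (shiftAutU_fix_center K p z.left h1) k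
    refine SemidirectProduct.ext ?_ ?_
    · rw [SemidirectProduct.mul_left, SemidirectProduct.mul_left, h2]
      simp only [map_one, MulAut.one_apply]
      have hfix2 : ((Subgroup.zpowers (shiftAutU K p)).subtype h.right) z.left = z.left := hfix
      rw [hfix2]
      exact Subgroup.mem_center_iff.mp h1 h.left
    · rw [SemidirectProduct.mul_right, SemidirectProduct.mul_right, h2, mul_one, one_mul]

end MainAux

/-- Let `p` be a prime, `W = {(x₁,…,x_p) ∈ Z(K)^p : x₁⋯x_p = 1}`, `U = K^p/W`,
`α` the automorphism of `U` induced by the cyclic shift, and `H = U ⋊ ⟨α⟩`.  If `K ≠ Z(K)`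
then `Z(H) = Z(U)` (embedded in `H`) and `H/Z(H) ≅ (K/Z(K)) ≀ C_p`, the regular wreath
product, realized as `(K/Z(K))^p ⋊ ⟨cyclic shift⟩`. -/
theorem center_and_quotient_of_shift_extension (p : ℕ) (hp : p.Prime) [NeZero p]
    [Finite K] (hK : Subgroup.center K ≠ ⊤) :
    Subgroup.center (Hgrp K p) =
      (Subgroup.center ((Fin p → K) ⧸ Wsub K p)).map SemidirectProduct.inl ∧
    Nonempty ((Hgrp K p ⧸ Subgroup.center (Hgrp K p)) ≃* WreathCp (K ⧸ Subgroup.center K) p) := by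
  classical
  haveI := Fact.mk hp
  haveI := nontrivial_quot K hK
  have hordA : orderOf (shiftAutU K p) = p := orderOf_shiftAutU_eq K p hp hK
  have hordB : orderOf (shiftAut (K ⧸ Subgroup.center K) p) = p :=
    orderOf_shiftAut_eq p _ hp
  have hiff : ∀ k : ℤ, (shiftAutU K p) ^ k = 1 ↔ (shiftAut (K ⧸ Subgroup.center K) p) ^ k = 1 := by
    intro k
    rw [← orderOf_dvd_iff_zpow_eq_one, ← orderOf_dvd_iff_zpow_eq_one, hordA, hordB]
  set f2 := cyclicHom (shiftAutU K p) (shiftAut (K ⧸ Subgroup.center K) p) hiff with hf2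
  have hcompat : ∀ σ : Subgroup.zpowers (shiftAutU K p),
      (f1 K p).comp (((Subgroup.zpowers (shiftAutU K p)).subtype σ)).toMonoidHom
        = (((Subgroup.zpowers (shiftAut (K ⧸ Subgroup.center K) p)).subtype
            (f2 σ))).toMonoidHom.comp (f1 K p) := by
    intro σ
    obtain ⟨k, hk⟩ := Subgroup.mem_zpowers_iff.mp σ.2
    have hB : ((f2 σ : Subgroup.zpowers (shiftAut (K ⧸ Subgroup.center K) p)) :
        MulAut (Fin p → K ⧸ Subgroup.center K)) = (shiftAut (K ⧸ Subgroup.center K) p) ^ k :=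
      cyclicHom_apply _ _ hiff σ k hk.symm
    refine MonoidHom.ext fun u => ?_
    show f1 K p ((σ : MulAut ((Fin p → K) ⧸ Wsub K p)) u)
      = ((f2 σ : Subgroup.zpowers (shiftAut (K ⧸ Subgroup.center K) p)) :
          MulAut (Fin p → K ⧸ Subgroup.center K)) (f1 K p u)
    rw [← hk, hB]
    exact auxSemiconjZpow (f1 K p) _ _ (f1_shift K p) k u
  set Φ : Hgrp K p →* WreathCp (K ⧸ Subgroup.center K) p :=
    SemidirectProduct.map (f1 K p) f2 hcompat with hPhi
  have hsurj : Function.Surjective Φ := by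
    intro w
    obtain ⟨u, hu⟩ := f1_surjective K p w.left
    obtain ⟨σ, hσ⟩ := cyclicHom_surjective _ _ hiff w.right
    refine ⟨⟨u, σ⟩, SemidirectProduct.ext ?_ ?_⟩
    · exact hu
    · exact hσ
  have hker : Φ.ker = (Subgroup.center ((Fin p → K) ⧸ Wsub K p)).map SemidirectProduct.inl := by
    ext z
    rw [MonoidHom.mem_ker, mem_map_inl_iff]
    constructor
    · intro h
      have hl := congrArg SemidirectProduct.left h
      have hr := congrArg SemidirectProduct.right h
      rw [SemidirectProduct.map_left, SemidirectProduct.one_left] at hl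
      rw [SemidirectProduct.map_right, SemidirectProduct.one_right] at hr
      refine ⟨(f1_eq_one_iff K p _).mp hl, ?_⟩
      exact cyclicHom_injective _ _ hiff (hr.trans (map_one f2).symm)
    · rintro ⟨h1, h2⟩
      refine SemidirectProduct.ext ?_ ?_
      · rw [SemidirectProduct.map_left, SemidirectProduct.one_left]
        exact (f1_eq_one_iff K p _).mpr h1
      · rw [SemidirectProduct.map_right, SemidirectProduct.one_right, h2, map_one]
  have hcen := center_Hgrp K p hp hK
  refine ⟨hcen, ?_⟩
  have heq : Subgroup.center (Hgrp K p) = Φ.ker := hcen.trans hker.symm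
  exact ⟨(QuotientGroup.quotientMulEquivOfEq heq).trans
    (QuotientGroup.quotientKerEquivOfSurjective Φ hsurj)⟩
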